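/- The Cantor–Bendixson index of the Schreier family S_1 satisfies ι(S_1) = ω, where for a compact family F ⊆ [ℕ]^{<∞}, ι(F) is the least ordinal α such that the α+1-st Cantor–Bendixson derivative F^{(α+1)} is empty. -/

import Mathlib

open Filter

/-- The characteristic function of a finite set, as an element of the Cantor
space `2^ℕ = ℕ → Bool`. -/
def charFun (A : Finset ℕ) : ℕ → Bool := fun n => decide (n ∈ A)

/-- A family of finite subsets of `ℕ` is hereditary if it is closed under subsets. -/
def IsHereditaryFam (F : Set (Finset ℕ)) : Prop :=
  ∀ A ∈ F, ∀ B ⊆ A, B ∈ F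

/-- A family is spreading if it is closed under moving elements to the right. -/
def IsSpreadingFam (F : Set (Finset ℕ)) : Prop :=
  ∀ A ∈ F, ∀ φ : ℕ → ℕ,
    (∀ a ∈ A, ∀ b ∈ A, a < b → φ a < φ b) → (∀ a ∈ A, a ≤ φ a) →
      A.image φ ∈ F

/-- A family is compact if it is compact (equivalently, closed) as a subset of
`2^ℕ` with the product topology. -/
def IsCompactFam (F : Set (Finset ℕ)) : Prop := IsClosed (charFun '' F)

/-- A regular family: hereditary, spreading and compact. -/
def IsRegularFam (F : Set (Finset ℕ)) : Prop :=
  IsHereditaryFam F ∧ IsSpreadingFam F ∧ IsCompactFam F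

/-- `famComp F G = F[G] = { G_1 ∪ ⋯ ∪ G_k : G_i ∈ G, G_1 < ⋯ < G_k,
(min G_i)_{i=1}^k ∈ F }`. -/
def famComp (F G : Set (Finset ℕ)) : Set (Finset ℕ) :=
  {H | ∃ (k : ℕ) (Gs : Fin k → Finset ℕ) (mins : Fin k → ℕ),
    (∀ i, Gs i ∈ G) ∧
    (∀ i, mins i ∈ Gs i) ∧
    (∀ i, ∀ a ∈ Gs i, mins i ≤ a) ∧
    (∀ i j : Fin k, i < j → ∀ a ∈ Gs i, ∀ b ∈ Gs j, a < b) ∧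
    Finset.image mins Finset.univ ∈ F ∧
    H = Finset.univ.biUnion Gs}

/-- The first Schreier family `S_1 = { A : |A| ≤ min A }` (on positive integers:
note `0 ∈ A` is impossible for nonempty members). -/
def SchreierOne : Set (Finset ℕ) := {A | ∀ n ∈ A, A.card ≤ n}

/-- The Schreier families `S_n`: `S_0` consists of singletons (of positive
integers) and `∅`, and `S_{n+1} = S_1[S_n]`. -/
def Schreier : ℕ → Set (Finset ℕ)
  | 0 => {A | A.card ≤ 1 ∧ 0 ∉ A}
  | n + 1 => famComp SchreierOne (Schreier n)

/-- The Cantor–Bendixson derivative: the set of accumulation points of `s`. -/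
def cbDeriv {X : Type*} [TopologicalSpace X] (s : Set X) : Set X :=
  {x | AccPt x (Filter.principal s)}

/-- Iterated Cantor–Bendixson derivatives `s^(o)`, indexed by ordinals. -/
noncomputable def cbIter {X : Type*} [TopologicalSpace X] (s : Set X)
    (o : Ordinal) : Set X :=
  Ordinal.limitRecOn o s (fun _ ih => cbDeriv ih)
    (fun o _ ih => ⋂ (b : Ordinal) (h : b < o), ih b h)

namespace CBAux

/-- The `k`-th derivative family: sets that can still be grown `k` times. -/
def Dk (k : ℕ) : Set (Finset ℕ) := {A | ∀ n ∈ A, A.card + k ≤ n}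

lemma empty_mem_Dk (k : ℕ) : ∅ ∈ Dk k := by simp [Dk]

lemma schreierOne_eq : SchreierOne = Dk 0 := by
  ext A; simp [SchreierOne, Dk]

lemma charFun_injective : Function.Injective charFun := by
  intro A B h
  ext n
  have := congrFun h n
  simpa [charFun] using this

lemma image_Dk_eq (k : ℕ) :
    charFun '' Dk k =
      {x | ∀ n, x n = true → ∀ s : Finset ℕ, (∀ m ∈ s, x m = true) → s.card + k ≤ n} := by
  ext x
  constructor
  · rintro ⟨A, hA, rfl⟩ n hn s hs
    have hnA : n ∈ A := by simpa [charFun] using hn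
    have hsA : s ⊆ A := fun m hm => by simpa [charFun] using hs m hm
    exact le_trans (Nat.add_le_add_right (Finset.card_le_card hsA) k) (hA n hnA)
  · intro hx
    by_cases h0 : ∀ n, x n = false
    · exact ⟨∅, empty_mem_Dk k, by funext n; simp [charFun, h0 n]⟩
    · push_neg at h0
      obtain ⟨n0, hn0⟩ := h0
      have hn0' : x n0 = true := by revert hn0; cases x n0 <;> simp
      have hfin : {m | x m = true}.Finite := by
        by_contra hinf
        have hinf' : Set.Infinite {m | x m = true} := hinf
        obtain ⟨s, hs_sub, hs_card⟩ := hinf'.exists_subset_card_eq (n0 + 1)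
        have := hx n0 hn0' s (fun m hm => hs_sub hm)
        omega
      refine ⟨hfin.toFinset, ?_, ?_⟩
      · intro n hn
        have hn' : x n = true := by simpa using hn
        exact hx n hn' hfin.toFinset (fun m hm => by simpa using hm)
      · funext n
        simp [charFun]

lemma isOpen_coord (m : ℕ) (b : Bool) : IsOpen {x : ℕ → Bool | x m = b} := by
  have h : {x : ℕ → Bool | x m = b} = (fun y : ℕ → Bool => y m) ⁻¹' {b} := rfl
  rw [h]
  exact IsOpen.preimage (continuous_apply m) (isOpen_discrete _)

lemma isClosed_image_Dk (k : ℕ) : IsClosed (charFun '' Dk k) := by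
  rw [image_Dk_eq]
  have heq : {x : ℕ → Bool | ∀ n, x n = true →
        ∀ s : Finset ℕ, (∀ m ∈ s, x m = true) → s.card + k ≤ n}
      = ⋂ (n : ℕ) (s : Finset ℕ),
          {x : ℕ → Bool | x n = true → (∀ m ∈ s, x m = true) → s.card + k ≤ n} := by
    ext x
    simp only [Set.mem_iInter, Set.mem_setOf_eq]
    tauto
  rw [heq]
  refine isClosed_iInter fun n => isClosed_iInter fun s => ?_
  by_cases hP : s.card + k ≤ n
  · have : {x : ℕ → Bool | x n = true → (∀ m ∈ s, x m = true) → s.card + k ≤ n}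
        = Set.univ := by
      ext x; simp [hP]
    rw [this]; exact isClosed_univ
  · have : {x : ℕ → Bool | x n = true → (∀ m ∈ s, x m = true) → s.card + k ≤ n}
        = ({x : ℕ → Bool | x n = true} ∩ ⋂ m ∈ s, {x : ℕ → Bool | x m = true})ᶜ := by
      ext x
      simp only [Set.mem_setOf_eq, Set.mem_compl_iff, Set.mem_inter_iff, Set.mem_iInter]
      tauto
    rw [this]
    refine IsOpen.isClosed_compl (IsOpen.inter ?_ ?_)
    · exact isOpen_coord n true
    · exact isOpen_biInter_finset fun m _ => isOpen_coord m true

lemma accPt_charFun {k : ℕ} {A : Finset ℕ} (hA : A ∈ Dk (k + 1)) :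
    AccPt (charFun A) (Filter.principal (charFun '' Dk k)) := by
  rw [accPt_principal_iff_clusterPt]
  rw [← mem_closure_iff_clusterPt]
  set N0 : ℕ := A.sup id + A.card + k + 1 with hN0
  have hnotmem : ∀ j : ℕ, N0 + j ∉ A := by
    intro j hj
    have := Finset.le_sup (f := id) hj
    simp only [id] at this
    omega
  have hmem : ∀ j : ℕ, charFun (insert (N0 + j) A) ∈ charFun '' Dk k \ {charFun A} := by
    intro j
    constructor
    · refine ⟨insert (N0 + j) A, ?_, rfl⟩
      intro n hn
      rw [Finset.card_insert_of_notMem (hnotmem j)]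
      rcases Finset.mem_insert.mp hn with h | h
      · omega
      · have := hA n h; omega
    · simp only [Set.mem_singleton_iff]
      intro hcontra
      have := congrFun hcontra (N0 + j)
      simp [charFun, hnotmem j] at this
  have htend : Filter.Tendsto (fun j : ℕ => charFun (insert (N0 + j) A))
      Filter.atTop (nhds (charFun A)) := by
    rw [tendsto_pi_nhds]
    intro m
    refine Filter.Tendsto.congr' ?_ tendsto_const_nhds
    filter_upwards [Filter.eventually_ge_atTop (m + 1)] with j hj
    have hne : m ≠ N0 + j := by omega
    simp [charFun, Finset.mem_insert, hne]
  exact mem_closure_of_tendsto htend (Filter.Eventually.of_forall hmem)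

lemma cbDeriv_image_Dk (k : ℕ) :
    cbDeriv (charFun '' Dk k) = charFun '' Dk (k + 1) := by
  ext x
  constructor
  · intro hx
    have hx' : x ∈ closure (charFun '' Dk k) :=
      mem_closure_iff_clusterPt.mpr (AccPt.clusterPt hx)
    rw [(isClosed_image_Dk k).closure_eq] at hx'
    obtain ⟨A, hA, rfl⟩ := hx'
    set M : ℕ := A.sup id with hM
    have hU : {y : ℕ → Bool | ∀ m ∈ Finset.range (M + 1), y m = charFun A m} ∈
        nhds (charFun A) := by
      have hopen : IsOpen {y : ℕ → Bool | ∀ m ∈ Finset.range (M + 1), y m = charFun A m} := by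
        have : {y : ℕ → Bool | ∀ m ∈ Finset.range (M + 1), y m = charFun A m}
            = ⋂ m ∈ Finset.range (M + 1), {y : ℕ → Bool | y m = charFun A m} := by
          ext y; simp
        rw [this]
        exact isOpen_biInter_finset fun m _ => isOpen_coord m (charFun A m)
      exact hopen.mem_nhds (fun m _ => rfl)
    obtain ⟨y, ⟨hyU, hyC⟩, hyne⟩ := accPt_iff_nhds.mp hx _ hU
    obtain ⟨B, hB, rfl⟩ := hyC
    have hAB : A ⊆ B := by
      intro n hn
      have hnM : n ∈ Finset.range (M + 1) := by
        simp only [Finset.mem_range]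
        have := Finset.le_sup (f := id) hn
        simp only [id] at this
        omega
      have := hyU n hnM
      simp only [charFun] at this
      rw [decide_eq_decide] at this
      exact this.mpr hn
    have hABne : A ≠ B := fun h => hyne (by rw [h])
    have hcard : A.card < B.card := Finset.card_lt_card ⟨hAB, fun h => hABne (Finset.Subset.antisymm hAB h)⟩
    refine ⟨A, ?_, rfl⟩
    intro n hn
    have := hB n (hAB hn)
    omega
  · rintro ⟨A, hA, rfl⟩
    exact accPt_charFun hA

lemma cbIter_zero {X : Type*} [TopologicalSpace X] (s : Set X) : cbIter s 0 = s :=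
  Ordinal.limitRecOn_zero _ _ _

lemma cbIter_succ {X : Type*} [TopologicalSpace X] (s : Set X) (o : Ordinal) :
    cbIter s (o + 1) = cbDeriv (cbIter s o) := by
  unfold cbIter
  rw [← Order.succ_eq_add_one, Ordinal.limitRecOn_succ]

lemma cbIter_limit {X : Type*} [TopologicalSpace X] (s : Set X) {o : Ordinal}
    (h : Order.IsSuccLimit o) : cbIter s o = ⋂ (b : Ordinal) (_ : b < o), cbIter s b := by
  unfold cbIter
  rw [Ordinal.limitRecOn_limit _ _ _ _ h]

lemma cbIter_nat (k : ℕ) :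
    cbIter (charFun '' SchreierOne) (k : Ordinal) = charFun '' Dk k := by
  induction k with
  | zero =>
      rw [Nat.cast_zero, cbIter_zero, schreierOne_eq]
  | succ n ih =>
      rw [Nat.cast_succ, cbIter_succ, ih, cbDeriv_image_Dk]

lemma cbIter_omega_sub :
    cbIter (charFun '' SchreierOne) Ordinal.omega0 ⊆ {charFun ∅} := by
  rw [cbIter_limit _ Ordinal.isSuccLimit_omega0]
  intro x hx
  simp only [Set.mem_iInter] at hx
  have h1 : x ∈ charFun '' Dk 1 := by
    have := hx 1 Ordinal.one_lt_omega0
    rwa [show (1 : Ordinal) = ((1 : ℕ) : Ordinal) by simp, cbIter_nat] at this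
  obtain ⟨A, _, rfl⟩ := h1
  by_cases hAe : A = ∅
  · simp [hAe]
  obtain ⟨n, hn⟩ := Finset.nonempty_iff_ne_empty.mpr hAe
  have h2 := hx ((n + 1 : ℕ) : Ordinal) (Ordinal.nat_lt_omega0 _)
  rw [cbIter_nat] at h2
  obtain ⟨B, hB, hBA⟩ := h2
  have hBAeq : B = A := charFun_injective hBA
  subst hBAeq
  have hc := hB n hn
  have := Finset.card_pos.mpr ⟨n, hn⟩
  omega

lemma cbDeriv_sub_singleton {X : Type*} [TopologicalSpace X] [T1Space X]
    {s : Set X} {p : X} (h : s ⊆ {p}) : cbDeriv s = ∅ := by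
  ext x
  simp only [cbDeriv, Set.mem_setOf_eq, Set.mem_empty_iff_false, iff_false]
  intro hx
  have hx' : AccPt x (Filter.principal {p}) :=
    hx.mono (Filter.principal_mono.mpr h)
  rw [accPt_principal_iff_clusterPt] at hx'
  by_cases hxp : x = p
  · rw [hxp, Set.diff_eq_empty.mpr subset_rfl] at hx'
    simp only [Filter.principal_empty] at hx'
    exact (ClusterPt.neBot hx').ne (by simp)
  · rw [Set.diff_eq, Set.inter_eq_self_of_subset_left (by
        intro q hq
        simp only [Set.mem_singleton_iff] at hq
        simp only [Set.mem_compl_iff, Set.mem_singleton_iff, hq]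
        exact fun h => hxp h.symm)] at hx'
    have hcl := mem_closure_iff_clusterPt.mpr hx'
    rw [closure_singleton] at hcl
    exact hxp hcl

end CBAux

open CBAux in
/-- The Cantor–Bendixson index of the Schreier family `S_1`, i.e. the least
ordinal `α` with `S_1^(α+1) = ∅`, equals `ω`. -/
theorem cbIndex_schreierOne :
    sInf {a : Ordinal | cbIter (charFun '' SchreierOne) (a + 1) = ∅} =
      Ordinal.omega0 := by
  refine IsLeast.csInf_eq ⟨?_, ?_⟩
  · show cbIter (charFun '' SchreierOne) (Ordinal.omega0 + 1) = ∅
    rw [cbIter_succ]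
    exact cbDeriv_sub_singleton cbIter_omega_sub
  · intro b hb
    by_contra hlt
    push_neg at hlt
    obtain ⟨n, rfl⟩ := Ordinal.lt_omega0.mp hlt
    have hb2 : cbIter (charFun '' SchreierOne) ((n : Ordinal) + 1) = ∅ := hb
    rw [show ((n : Ordinal) + 1) = ((n + 1 : ℕ) : Ordinal) by push_cast; ring_nf,
      cbIter_nat] at hb2
    have hne : (charFun '' Dk (n + 1)).Nonempty := ⟨charFun ∅, ∅, empty_mem_Dk _, rfl⟩
    exact hne.ne_empty hb2
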